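/- Let T : ℝ → ℝ, α > 0, and for i = 1, 2 let q1_i, q0_i ∈ ℝ with Δ_i = q1_i − q0_i, and let x_i ∈ [0,1] be a minimizer over [0,1] of the relaxed actor loss L_i(x) = −(x·q1_i + (1−x)·q0_i) + α·T(x). If Δ_1 > Δ_2, then x_1 ≥ x_2. (Monotonicity of the optimal relaxed allocator output in the critic advantage Q(s,1) − Q(s,0).) -/
import Mathlib


/-- Monotonicity of the optimal relaxed allocator output in the critic
advantage Δ = q1 − q0: a larger advantage yields a (weakly) larger minimizer of
the relaxed actor loss on [0,1]. -/
theorem rla_monotone_in_advantage (T : ℝ → ℝ) (α : ℝ) (hα : 0 < α)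
    (q1₁ q0₁ q1₂ q0₂ : ℝ)
    (x₁ x₂ : ℝ) (hx₁ : x₁ ∈ Set.Icc (0 : ℝ) 1) (hx₂ : x₂ ∈ Set.Icc (0 : ℝ) 1)
    (hmin₁ : ∀ y ∈ Set.Icc (0 : ℝ) 1,
      -(x₁ * q1₁ + (1 - x₁) * q0₁) + α * T x₁ ≤
        -(y * q1₁ + (1 - y) * q0₁) + α * T y)
    (hmin₂ : ∀ y ∈ Set.Icc (0 : ℝ) 1,
      -(x₂ * q1₂ + (1 - x₂) * q0₂) + α * T x₂ ≤
        -(y * q1₂ + (1 - y) * q0₂) + α * T y)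
    (hΔ : q1₂ - q0₂ < q1₁ - q0₁) :
    x₂ ≤ x₁ := by
  have h1 := hmin₁ x₂ hx₂
  have h2 := hmin₂ x₁ hx₁
  by_contra h
  push_neg at h
  nlinarith [mul_pos (sub_pos.mpr hΔ) (sub_pos.mpr h)]
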